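/- Let f be a strategyproof and anonymous mechanism. For any profile x = (x_1, …, x_n) and any profile x' = (x'_i, x_{−i}) obtained by changing agent i's report, let j = f_i(x) and j' = f_i(x'). If j = j', then the number of agents assigned to j is the same under both outcomes: n_j(f(x)) = n_j(f(x')). -/

import Mathlib

/-- Number of agents assigned to facility `j` under assignment `s`. -/
def facCount {n m : ℕ} (s : Fin n → Fin m) (j : Fin m) : ℕ :=
  (Finset.univ.filter fun i => s i = j).card

/-- Cost of an agent with true position `y` under assignment `s`, being agent `i`. -/
noncomputable def agentCost {n m : ℕ} (ℓ bc : Fin m → ℝ) (y : ℝ)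
    (s : Fin n → Fin m) (i : Fin n) : ℝ :=
  |y - ℓ (s i)| + bc (s i) / (facCount s (s i) : ℝ)

/-- A mechanism is strategyproof if no agent can decrease her (true) cost
by misreporting her position. -/
def Strategyproof {n m : ℕ} (ℓ bc : Fin m → ℝ)
    (f : (Fin n → ℝ) → Fin n → Fin m) : Prop :=
  ∀ (x : Fin n → ℝ) (i : Fin n) (xi' : ℝ),
    agentCost ℓ bc (x i) (f x) i ≤
      agentCost ℓ bc (x i) (f (Function.update x i xi')) i

/-- A mechanism is anonymous if permuting the reported positions permutes the
assignment accordingly. -/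
def Anonymous {n m : ℕ} (f : (Fin n → ℝ) → Fin n → Fin m) : Prop :=
  ∀ (π : Equiv.Perm (Fin n)) (x : Fin n → ℝ) (i : Fin n),
    f (x ∘ π) i = f x (π i)


/-- Property (P3): if an agent's assigned facility is the same before and after
a unilateral misreport, then the number of agents assigned to that facility is
also the same. -/
theorem sp_anonymous_P3 {n m : ℕ} (ℓ bc : Fin m → ℝ) (hb : ∀ j, 0 < bc j)
    (f : (Fin n → ℝ) → Fin n → Fin m)
    (hsp : Strategyproof ℓ bc f) (han : Anonymous f)
    (x : Fin n → ℝ) (i : Fin n) (xi' : ℝ)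
    (j j' : Fin m) (hj : j = f x i) (hj' : j' = f (Function.update x i xi') i)
    (hjj' : j = j') :
    facCount (f x) j = facCount (f (Function.update x i xi')) j := by
  set x' := Function.update x i xi' with hx'
  have hfx : f x i = j := hj.symm
  have hfx' : f x' i = j := by rw [hjj', hj']
  -- counts are positive
  have hc1 : 0 < facCount (f x) j := by
    apply Finset.card_pos.mpr
    exact ⟨i, by simp [hfx]⟩
  have hc2 : 0 < facCount (f x') j := by
    apply Finset.card_pos.mpr
    exact ⟨i, by simp [hfx']⟩
  have hc1' : (0:ℝ) < (facCount (f x) j : ℝ) := by exact_mod_cast hc1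
  have hc2' : (0:ℝ) < (facCount (f x') j : ℝ) := by exact_mod_cast hc2
  -- first SP inequality: from x, misreport xi'
  have h1 := hsp x i xi'
  rw [← hx'] at h1
  unfold agentCost at h1
  rw [hfx, hfx'] at h1
  have h1' : bc j / (facCount (f x) j : ℝ) ≤ bc j / (facCount (f x') j : ℝ) := by
    linarith
  -- second SP inequality: from x', misreport x i
  have hback : Function.update x' i (x i) = x := by
    rw [hx', Function.update_idem, Function.update_eq_self]
  have h2 := hsp x' i (x i)
  rw [hback] at h2
  unfold agentCost at h2
  rw [hfx, hfx'] at h2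
  have h2' : bc j / (facCount (f x') j : ℝ) ≤ bc j / (facCount (f x) j : ℝ) := by
    linarith
  have heq : bc j / (facCount (f x) j : ℝ) = bc j / (facCount (f x') j : ℝ) :=
    le_antisymm h1' h2'
  have : (facCount (f x) j : ℝ) = (facCount (f x') j : ℝ) := by
    field_simp at heq
    have hbj := hb j
    rcases mul_eq_mul_left_iff.mp heq with h | h
    · exact h.symm ▸ rfl
    · exact absurd h (ne_of_gt hbj)
  exact_mod_cast this
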